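/- For f ∈ C_c(ℝ), the L² norm of f on ℝ equals the L² norm of its Zak transform Zf restricted to the unit square [0,1]², i.e., ∫_ℝ |f(y)|² dy = ∫_0^1 ∫_0^1 |Zf(x,ω)|² dω dx. -/

import Mathlib

open MeasureTheory Real

lemma orth (k : ℤ) : ∫ ω in (0:ℝ)..1, Complex.exp (2 * Real.pi * Complex.I * k * ω)
    = if k = 0 then 1 else 0 := by
  rcases eq_or_ne k 0 with hk | hk
  · simp [hk]
  · have hc : (2 * Real.pi * Complex.I * k : ℂ) ≠ 0 := by
      simp [Real.pi_ne_zero, Complex.I_ne_zero, hk]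
    have h := integral_exp_mul_complex (a := 0) (b := 1) hc
    simp only [mul_assoc] at h ⊢
    rw [h]
    have h1 : Complex.exp (2 * ((Real.pi:ℂ) * (Complex.I * ((k:ℂ) * ((1:ℝ):ℂ))))) = 1 := by
      have e : (2 * ((Real.pi:ℂ) * (Complex.I * ((k:ℂ) * ((1:ℝ):ℂ))))) = (k:ℂ) * (2 * Real.pi * Complex.I) := by
        push_cast; ring
      rw [e, Complex.exp_int_mul_two_pi_mul_I]
    have h0 : (2 * ((Real.pi:ℂ) * (Complex.I * ((k:ℂ) * ((0:ℝ):ℂ))))) = 0 := by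
      push_cast; ring
    rw [h1, h0, Complex.exp_zero, sub_self, zero_div, if_neg hk]

lemma parseval_fin (M : Finset ℤ) (c : ℤ → ℂ) :
    ∫ ω in (0:ℝ)..1, ‖∑ m ∈ M, c m * Complex.exp (2 * Real.pi * Complex.I * m * ω)‖ ^ 2
      = ∑ m ∈ M, ‖c m‖ ^ 2 := by
  set e : ℤ → ℝ → ℂ := fun m ω => Complex.exp (2 * Real.pi * Complex.I * m * ω) with he
  have hecont : ∀ k : ℤ, Continuous (e k) := by
    intro k; apply Complex.continuous_exp.comp; fun_prop
  have hint : ∀ (m n : ℤ), IntervalIntegrable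
      (fun ω => c m * (starRingEnd ℂ) (c n) * e (m - n) ω) volume (0:ℝ) 1 :=
    fun m n => (continuous_const.mul (hecont _)).intervalIntegrable _ _
  have hconj : ∀ (n : ℤ) (ω : ℝ), (starRingEnd ℂ) (e n ω) = e (-n) ω := by
    intro n ω
    rw [he]
    simp only [← Complex.exp_conj, map_mul, Complex.conj_I, Complex.conj_ofReal, map_intCast,
      map_ofNat]
    push_cast
    ring_nf
  have hmul : ∀ (m n : ℤ) (ω : ℝ), e m ω * e (-n) ω = e (m - n) ω := by
    intro m n ω
    rw [he]
    simp only [← Complex.exp_add]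
    congr 1
    push_cast
    ring
  have key : (∫ ω in (0:ℝ)..1,
      ((∑ m ∈ M, c m * e m ω) * (starRingEnd ℂ) (∑ n ∈ M, c n * e n ω)))
      = ∑ m ∈ M, (c m * (starRingEnd ℂ) (c m)) := by
    have expand : ∀ ω : ℝ, (∑ m ∈ M, c m * e m ω) * (starRingEnd ℂ) (∑ n ∈ M, c n * e n ω)
        = ∑ m ∈ M, ∑ n ∈ M, c m * (starRingEnd ℂ) (c n) * e (m - n) ω := by
      intro ω
      rw [map_sum, Finset.sum_mul_sum]
      refine Finset.sum_congr rfl fun m _ => Finset.sum_congr rfl fun n _ => ?_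
      rw [map_mul, hconj]
      calc c m * e m ω * ((starRingEnd ℂ) (c n) * e (-n) ω)
          = c m * (starRingEnd ℂ) (c n) * (e m ω * e (-n) ω) := by ring
        _ = c m * (starRingEnd ℂ) (c n) * e (m - n) ω := by rw [hmul]
    simp only [expand]
    rw [intervalIntegral.integral_finset_sum]
    · refine Finset.sum_congr rfl fun m hm => ?_
      rw [intervalIntegral.integral_finset_sum (fun n _ => hint m n)]
      have : ∀ n, (∫ ω in (0:ℝ)..1, c m * (starRingEnd ℂ) (c n) * e (m - n) ω)
          = c m * (starRingEnd ℂ) (c n) * (if m - n = 0 then (1:ℂ) else 0) := by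
        intro n
        rw [intervalIntegral.integral_const_mul, he, orth]
      simp only [this]
      rw [Finset.sum_eq_single m]
      · simp
      · intro n _ hne
        rw [if_neg (by omega), mul_zero]
      · intro h; exact absurd hm h
    · intro m _
      exact ((continuous_finset_sum M fun n _ =>
        continuous_const.mul (hecont _))).intervalIntegrable _ _
  have hsq : ∀ z : ℂ, ((‖z‖ ^ 2 : ℝ) : ℂ) = z * (starRingEnd ℂ) z := by
    intro z; rw [Complex.mul_conj, Complex.normSq_eq_norm_sq]
  apply Complex.ofReal_injective
  rw [← intervalIntegral.integral_ofReal]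
  simp only [hsq]
  rw [key, Complex.ofReal_sum]
  exact Finset.sum_congr rfl fun m _ => (hsq _).symm

/-- The Zak transform `Zf(x,ω) = Σ_{m∈ℤ} f(x−m) e^{2πimω}`. -/
noncomputable def zak (f : ℝ → ℂ) (x ω : ℝ) : ℂ :=
  ∑' m : ℤ, f (x - m) * Complex.exp (2 * Real.pi * Complex.I * m * ω)

/-- the Zak transform is isometric:
`∫_ℝ |f(y)|² dy = ∫_0^1 ∫_0^1 |Zf(x,ω)|² dω dx` for `f ∈ C_c(ℝ)`. -/
theorem zak_isometry (f : ℝ → ℂ) (hc : Continuous f) (hs : HasCompactSupport f) :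
    ∫ y : ℝ, ‖f y‖ ^ 2 = ∫ x in (0:ℝ)..1, ∫ ω in (0:ℝ)..1, ‖zak f x ω‖ ^ 2 := by
  obtain ⟨r, hr⟩ := hs.isBounded.subset_closedBall 0
  have hsupp : ∀ y : ℝ, r < |y| → f y = 0 := by
    intro y hy
    by_contra h
    have := hr (subset_tsupport f h)
    rw [Metric.mem_closedBall, Real.dist_eq, sub_zero] at this
    linarith
  set N : ℕ := ⌈r⌉₊ + 1 with hN
  have hrN : r < N := lt_of_le_of_lt (Nat.le_ceil r) (by exact_mod_cast Nat.lt_succ_self _)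
  set M : Finset ℤ := Finset.Icc (-(N:ℤ)) ((N:ℤ)+1) with hM
  set g : ℝ → ℝ := fun y => ‖f y‖ ^ 2 with hg
  have hgcont : Continuous g := (hc.norm).pow 2
  have hzero : ∀ x ∈ Set.Icc (0:ℝ) 1, ∀ m : ℤ, m ∉ M → f (x - m) = 0 := by
    intro x hx m hm
    apply hsupp
    rw [hM, Finset.mem_Icc, not_and_or, not_le, not_le] at hm
    have hcase : m ≤ -((N:ℤ)+1) ∨ (N:ℤ)+2 ≤ m := by omega
    rcases hcase with h | h
    · have h' : (m:ℝ) ≤ -((N:ℝ)+1) := by exact_mod_cast h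
      have : (N:ℝ)+1 ≤ x - m := by linarith [hx.1]
      calc r < (N:ℝ) + 1 := by linarith
        _ ≤ x - m := this
        _ ≤ |x - (m:ℝ)| := le_abs_self _
    · have h' : (N:ℝ)+2 ≤ (m:ℝ) := by exact_mod_cast h
      have : (N:ℝ)+1 ≤ -(x - m) := by linarith [hx.2]
      calc r < (N:ℝ) + 1 := by linarith
        _ ≤ -(x - m) := this
        _ ≤ |x - (m:ℝ)| := neg_le_abs _
  have inner : ∀ x ∈ Set.Icc (0:ℝ) 1,
      (∫ ω in (0:ℝ)..1, ‖zak f x ω‖ ^ 2) = ∑ m ∈ M, g (x - m) := by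
    intro x hx
    have hfin : ∀ ω : ℝ, zak f x ω
        = ∑ m ∈ M, f (x - m) * Complex.exp (2 * Real.pi * Complex.I * m * ω) := by
      intro ω
      exact tsum_eq_sum (fun m hm => by rw [hzero x hx m hm, zero_mul])
    simp only [zak] at hfin
    simp only [zak, hfin]
    exact parseval_fin M (fun m => f (x - m))
  have step1 : (∫ x in (0:ℝ)..1, ∫ ω in (0:ℝ)..1, ‖zak f x ω‖ ^ 2)
      = ∫ x in (0:ℝ)..1, ∑ m ∈ M, g (x - m) := by
    apply intervalIntegral.integral_congr
    intro x hx
    exact inner x (by rwa [Set.uIcc_of_le zero_le_one] at hx)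
  rw [step1, intervalIntegral.integral_finset_sum
    (fun (m : ℤ) _ => Continuous.intervalIntegrable
      (show Continuous fun x : ℝ => g (x - (m:ℝ)) from hgcont.comp (by fun_prop)) _ _)]
  have step2 : ∀ m : ℤ, (∫ x in (0:ℝ)..1, g (x - (m:ℝ)))
      = ∫ y in ((0:ℝ)-m)..(1-(m:ℝ)), g y :=
    fun m => intervalIntegral.integral_comp_sub_right g (m:ℝ)
  simp only [step2]
  set a : ℕ → ℝ := fun i => -((N:ℝ)+1) + i with ha
  have hadj : ∑ i ∈ Finset.range (2*N+2), (∫ x in (a i)..(a (i+1)), g x)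
      = ∫ x in (a 0)..(a (2*N+2)), g x :=
    intervalIntegral.sum_integral_adjacent_intervals
      (fun k _ => hgcont.intervalIntegrable _ _)
  have step3 : ∑ m ∈ M, (∫ y in ((0:ℝ)-m)..(1-(m:ℝ)), g y)
      = ∑ i ∈ Finset.range (2*N+2), (∫ x in (a i)..(a (i+1)), g x) := by
    apply Finset.sum_nbij' (i := fun m => ((N:ℤ)+1-m).toNat) (j := fun i => (N:ℤ)+1-i)
    · intro m hm
      rw [hM, Finset.mem_Icc] at hm
      rw [Finset.mem_range]
      omega
    · intro i hi
      rw [Finset.mem_range] at hi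
      rw [hM, Finset.mem_Icc]
      omega
    · intro m hm
      rw [hM, Finset.mem_Icc] at hm
      omega
    · intro i hi
      rw [Finset.mem_range] at hi
      omega
    · intro m hm
      rw [hM, Finset.mem_Icc] at hm
      have hk : ((((N:ℤ)+1-m).toNat : ℤ)) = (N:ℤ)+1-m :=
        Int.toNat_of_nonneg (by omega)
      have hc1 : ((((N:ℤ)+1-m).toNat : ℕ) : ℝ) = (N:ℝ)+1-m := by exact_mod_cast hk
      have hc2 : (((((N:ℤ)+1-m).toNat + 1 : ℕ)) : ℝ) = (N:ℝ)+2-m := by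
        push_cast
        push_cast at hc1
        linarith
      rw [ha]
      congr 1 <;> simp only [hc1, hc2] <;> ring
  rw [step3, hadj]
  have ha0 : a 0 = -((N:ℝ)+1) := by simp [ha]
  have ha2 : a (2*N+2) = (N:ℝ)+1 := by push_cast [ha]; ring
  rw [ha0, ha2, intervalIntegral.integral_of_le (by have : (0:ℝ) ≤ N := Nat.cast_nonneg N; linarith)]
  symm
  apply MeasureTheory.setIntegral_eq_integral_of_forall_compl_eq_zero
  intro y hy
  rw [Set.mem_Ioc, not_and_or, not_lt, not_le] at hy
  have : r < |y| := by
    rcases hy with h | h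
    · calc r < (N:ℝ)+1 := by linarith
        _ ≤ -y := by linarith
        _ ≤ |y| := neg_le_abs _
    · calc r < (N:ℝ)+1 := by linarith
        _ ≤ y := le_of_lt h
        _ ≤ |y| := le_abs_self _
  rw [hg]
  simp [hsupp y this]
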